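/- Fix p ∈ (0, 1/2). There exist K₀ > 0 and γ' ∈ (0, 1/2) such that for all K ≥ K₀, all x ∈ 𝕋², and all unit vectors v ∈ ℝ², the expectation over (θ₁, θ₂) uniformly distributed on [0,2π)² of ‖J(θ₂)·J(θ₁)·v‖^{-p} is at most γ', where J(θ) is the matrix with rows (1, K cos θ) and (1, 1 + K cos θ). -/

import Mathlib

set_option maxHeartbeats 1000000

open Real MeasureTheory

/-- The one-step Jacobian `J(θ)` of the randomized Chirikov map, with rows
`(1, K cos θ)` and `(1, 1 + K cos θ)`. -/
noncomputable def chirikovJac (K θ : ℝ) : Matrix (Fin 2) (Fin 2) ℝ :=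
  !![1, K * Real.cos θ; 1, 1 + K * Real.cos θ]

namespace Stmt2Aux

lemma chirikov_mulVec0 (K θ₁ θ₂ : ℝ) (v : Fin 2 → ℝ) :
    ((chirikovJac K θ₂ * chirikovJac K θ₁).mulVec v) 0 =
      (v 0 + K * Real.cos θ₁ * v 1)
        + (K * (v 0 + (1 + K * Real.cos θ₁) * v 1)) * Real.cos θ₂ := by
  simp [chirikovJac, Matrix.mulVec, Matrix.mul_apply, dotProduct, Fin.sum_univ_two]
  ring


lemma countable_sinzero (φ : ℝ) : ({θ : ℝ | Real.sin ((θ - φ)/2) = 0}).Countable := by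
  have hsub : {θ : ℝ | Real.sin ((θ - φ)/2) = 0} ⊆
      Set.range (fun n : ℤ => 2*((n:ℝ)*π) + φ) := by
    intro θ hθ
    rcases Real.sin_eq_zero_iff.1 hθ with ⟨n, hn⟩
    exact ⟨n, by simp only; linarith⟩
  exact (Set.countable_range _).mono hsub

lemma cos_level_null (c : ℝ) : volume {θ : ℝ | Real.cos θ = c} = 0 := by
  rcases le_or_gt |c| 1 with h | h
  · set θ₀ := Real.arccos c with hθ₀
    have hc : Real.cos θ₀ = c := Real.cos_arccos (abs_le.1 h).1 (abs_le.1 h).2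
    have hsub : {θ : ℝ | Real.cos θ = c} ⊆
        {θ : ℝ | Real.sin ((θ - (-θ₀))/2) = 0} ∪ {θ : ℝ | Real.sin ((θ - θ₀)/2) = 0} := by
      intro θ hθ
      have h2 : Real.cos θ - Real.cos θ₀ = 0 := by
        rw [hc]; exact sub_eq_zero.2 hθ
      rw [Real.cos_sub_cos] at h2
      rcases mul_eq_zero.1 h2 with h3 | h3
      · rcases mul_eq_zero.1 h3 with h4 | h4
        · norm_num at h4
        · left
          show Real.sin ((θ - (-θ₀))/2) = 0
          rw [sub_neg_eq_add]; exact h4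
      · right; exact h3
    refine measure_mono_null hsub (le_antisymm ?_ zero_le)
    calc volume _ ≤ volume {θ : ℝ | Real.sin ((θ - (-θ₀))/2) = 0}
          + volume {θ : ℝ | Real.sin ((θ - θ₀)/2) = 0} := measure_union_le _ _
      _ = 0 := by
          rw [(countable_sinzero (-θ₀)).measure_zero, (countable_sinzero θ₀).measure_zero,
            add_zero]
  · have he : {θ : ℝ | Real.cos θ = c} = ∅ := by
      ext θ
      simp only [Set.mem_setOf_eq, Set.mem_empty_iff_false, iff_false]
      intro h'
      have := Real.abs_cos_le_one θ
      rw [h'] at this; linarith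
    simp [he]

lemma sin_half_lb {θ : ℝ} (h0 : 0 ≤ θ) (h2 : θ ≤ 2*π) :
    min θ (2*π - θ) / π ≤ Real.sin (θ/2) := by
  have hπ := Real.pi_pos
  rcases le_or_gt θ π with h | h
  · have hs := Real.mul_le_sin (x := θ/2) (by linarith) (by linarith)
    have h1 : 2/π * (θ/2) = θ/π := by field_simp
    have h3 : min θ (2*π - θ) / π ≤ θ/π := by
      gcongr
      exact min_le_left _ _
    linarith
  · have hs := Real.mul_le_sin (x := π - θ/2) (by linarith) (by linarith)
    rw [Real.sin_pi_sub] at hs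
    have h1 : 2/π * (π - θ/2) = (2*π - θ)/π := by field_simp
    have h3 : min θ (2*π - θ) / π ≤ (2*π - θ)/π := by
      gcongr
      exact min_le_right _ _
    linarith

lemma min_rpow_le_add {b c r : ℝ} (hb : 0 ≤ b) (hc : 0 ≤ c) :
    (min b c) ^ r ≤ b ^ r + c ^ r := by
  rcases min_cases b c with ⟨h, _⟩ | ⟨h, _⟩ <;> rw [h]
  · exact le_add_of_nonneg_right (Real.rpow_nonneg hc r)
  · exact le_add_of_nonneg_left (Real.rpow_nonneg hb r)


lemma base_integrable {q : ℝ} (hq0 : 0 < q) (hq1 : q < 1) :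
    IntegrableOn (fun θ : ℝ => |Real.sin (θ/2)| ^ (-q)) (Set.Icc 0 (2*π)) := by
  have hπ := Real.pi_pos
  have h2π : (0:ℝ) ≤ 2*π := by linarith
  have hg : IntegrableOn (fun θ : ℝ => π^q * θ^(-q) + π^q * (2*π - θ)^(-q))
      (Set.Icc 0 (2*π)) := by
    have h1 : IntervalIntegrable (fun x : ℝ => x ^ (-q)) volume 0 (2*π) :=
      intervalIntegral.intervalIntegrable_rpow' (by linarith)
    have h2 : IntervalIntegrable (fun x : ℝ => (2*π - x) ^ (-q)) volume 0 (2*π) := by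
      have := (h1.comp_sub_left (2*π)).symm
      simpa using this
    have h3 := (h1.const_mul (π^q)).add (h2.const_mul (π^q))
    rwa [intervalIntegrable_iff_integrableOn_Icc_of_le h2π] at h3
  refine hg.integrable.mono' ?_ ?_
  · exact ((Real.measurable_sin.comp (measurable_id.div_const 2)).abs.pow_const
      (-q)).aestronglyMeasurable
  · rw [ae_restrict_iff' measurableSet_Icc]
    refine Filter.Eventually.of_forall fun θ hθ => ?_
    obtain ⟨hθ0, hθ2⟩ := hθ
    rw [Real.norm_eq_abs, abs_of_nonneg (Real.rpow_nonneg (abs_nonneg _) _)]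
    rcases eq_or_lt_of_le hθ0 with h0 | h0
    · rw [← h0]
      norm_num
      rw [Real.zero_rpow (by linarith)]
      positivity
    rcases eq_or_lt_of_le hθ2 with h2 | h2
    · rw [h2]
      have hz : Real.sin (2*π/2) = 0 := by norm_num
      rw [hz, abs_zero, Real.zero_rpow (by linarith : -q ≠ 0)]
      have t1 : (0:ℝ) ≤ π^q * (2*π:ℝ)^(-q) := by positivity
      have t2 : (0:ℝ) ≤ π^q * ((2*π:ℝ) - 2*π)^(-q) :=
        mul_nonneg (by positivity) (Real.rpow_nonneg (by linarith) _)
      linarith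
    have hs : 0 < Real.sin (θ/2) :=
      Real.sin_pos_of_pos_of_lt_pi (by linarith) (by linarith)
    have hmin : 0 < min θ (2*π - θ) := lt_min h0 (by linarith)
    have hkey : min θ (2*π - θ) / π ≤ |Real.sin (θ/2)| := by
      rw [abs_of_pos hs]; exact sin_half_lb hθ0 hθ2
    have hstep : |Real.sin (θ/2)| ^ (-q) ≤ (min θ (2*π - θ) / π) ^ (-q) :=
      Real.rpow_le_rpow_of_nonpos (by positivity) hkey (by linarith)
    have hsplit : (min θ (2*π - θ) / π) ^ (-q) = π^q * (min θ (2*π - θ)) ^ (-q) := by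
      rw [Real.div_rpow hmin.le hπ.le, Real.rpow_neg hπ.le, div_eq_mul_inv, inv_inv, mul_comm]
    have hmin2 : (min θ (2*π - θ)) ^ (-q) ≤ θ^(-q) + (2*π - θ)^(-q) :=
      min_rpow_le_add hθ0 (by linarith)
    calc |Real.sin (θ/2)| ^ (-q) ≤ π^q * (min θ (2*π - θ)) ^ (-q) := by
          rw [← hsplit]; exact hstep
      _ ≤ π^q * θ^(-q) + π^q * (2*π - θ)^(-q) := by
          rw [← mul_add]
          exact mul_le_mul_of_nonneg_left hmin2 (Real.rpow_nonneg hπ.le q)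


lemma sin_pow_periodic (q : ℝ) :
    Function.Periodic (fun x : ℝ => |Real.sin (x/2)| ^ (-q)) (2*π) := by
  intro x
  have : Real.sin ((x + 2*π)/2) = -Real.sin (x/2) := by
    rw [show (x + 2*π)/2 = x/2 + π by ring, Real.sin_add_pi]
  simp only [this, abs_neg]

lemma shifted_lemma {q : ℝ} (hq0 : 0 < q) (hq1 : q < 1) (φ : ℝ) :
    IntegrableOn (fun θ : ℝ => |Real.sin ((θ - φ)/2)| ^ (-q)) (Set.Icc 0 (2*π)) ∧
    ∫ θ in Set.Icc 0 (2*π), |Real.sin ((θ - φ)/2)| ^ (-q)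
      = ∫ θ in Set.Icc (0:ℝ) (2*π), |Real.sin (θ/2)| ^ (-q) := by
  have hπ := Real.pi_pos
  have h2π : (0:ℝ) < 2*π := by linarith
  set f : ℝ → ℝ := fun x => |Real.sin (x/2)| ^ (-q) with hf
  have hper : Function.Periodic f (2*π) := sin_pow_periodic q
  have hbase : IntervalIntegrable f volume 0 (2*π) := by
    rw [intervalIntegrable_iff_integrableOn_Icc_of_le h2π.le]
    exact base_integrable hq0 hq1
  -- integrability on every period window
  have hall : ∀ a : ℝ, IntervalIntegrable f volume a (a + 2*π) := by
    intro a
    set n : ℤ := ⌊a / (2*π)⌋ with hn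
    have hone : ∀ m : ℤ, IntervalIntegrable f volume (m*(2*π)) (m*(2*π) + 2*π) := by
      intro m
      have h1 := hbase.comp_sub_right ((m:ℝ)*(2*π))
      have heq : (fun x => f (x - (m:ℝ)*(2*π))) = f := by
        funext x
        exact hper.sub_int_mul_eq m
      rw [heq] at h1
      simpa [zero_add, add_comm] using h1
    have h2' : IntervalIntegrable f volume ((n:ℝ)*(2*π) + 2*π) ((n:ℝ)*(2*π) + 2*π + 2*π) := by
      have h := hone (n+1)
      have e1 : ((n+1:ℤ):ℝ)*(2*π) = (n:ℝ)*(2*π) + 2*π := by push_cast; ring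
      rw [e1] at h
      exact h
    have h12 := (hone n).trans h2'
    have hna : (n:ℝ)*(2*π) ≤ a := by
      rw [hn]
      have := Int.floor_le (a / (2*π))
      calc ((⌊a / (2*π)⌋:ℤ):ℝ)*(2*π) ≤ (a/(2*π))*(2*π) := by
            apply mul_le_mul_of_nonneg_right this h2π.le
        _ = a := by field_simp
    have hab : a + 2*π ≤ (n:ℝ)*(2*π) + 2*π + 2*π := by
      have := Int.lt_floor_add_one (a / (2*π))
      have h' : a < ((n:ℝ)+1)*(2*π) := by
        rw [hn]
        calc a = (a/(2*π))*(2*π) := by field_simp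
          _ < (((⌊a / (2*π)⌋:ℤ):ℝ)+1)*(2*π) := by
              apply mul_lt_mul_of_pos_right ?_ h2π
              exact_mod_cast this
      nlinarith
    refine h12.mono_set ?_
    rw [Set.uIcc_of_le (by linarith), Set.uIcc_of_le (by linarith)]
    exact Set.Icc_subset_Icc hna hab
  constructor
  · have h1 : IntervalIntegrable (fun x => f (x - φ)) volume 0 (2*π) := by
      have := (hall (-φ)).comp_sub_right φ
      simpa using this
    rw [intervalIntegrable_iff_integrableOn_Icc_of_le h2π.le] at h1
    exact h1
  · rw [show (∫ θ in Set.Icc (0:ℝ) (2*π), |Real.sin ((θ - φ)/2)| ^ (-q))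
        = ∫ θ in Set.Icc (0:ℝ) (2*π), f (θ - φ) from rfl]
    rw [integral_Icc_eq_integral_Ioc, integral_Icc_eq_integral_Ioc,
      ← intervalIntegral.integral_of_le h2π.le, ← intervalIntegral.integral_of_le h2π.le]
    calc ∫ θ in (0:ℝ)..(2*π), f (θ - φ)
        = ∫ θ in (0:ℝ)-φ..(2*π)-φ, f θ := intervalIntegral.integral_comp_sub_right f φ
      _ = ∫ θ in (0:ℝ)..(2*π), f θ := by
          have h := hper.intervalIntegral_add_eq (-φ) 0
          rw [zero_add] at h
          rw [show (0:ℝ) - φ = -φ by ring, show 2*π - φ = -φ + 2*π by ring]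
          exact h


lemma sq_rpow_neg {x : ℝ} (hx : 0 ≤ x) (p : ℝ) : (x ^ (-p))^2 = x ^ (-(2*p)) := by
  rw [← Real.rpow_natCast (x ^ (-p)) 2, ← Real.rpow_mul hx,
    show (-p) * ((2:ℕ):ℝ) = -(2*p) by push_cast; ring]

lemma rpow_sq_neg {x : ℝ} (hx : 0 ≤ x) (p : ℝ) : (x^2) ^ (-p) = x ^ (-(2*p)) := by
  rw [← Real.rpow_natCast x 2, ← Real.rpow_mul hx,
    show ((2:ℕ):ℝ) * (-p) = -(2*p) by push_cast; ring]

lemma master {p : ℝ} (hp : 0 < p) (hp' : p < 1/2) :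
    ∃ C : ℝ, 0 < C ∧ ∀ α β : ℝ, 0 < max |α| |β| →
      IntegrableOn (fun θ : ℝ => |α + β * Real.cos θ| ^ (-p)) (Set.Icc 0 (2*π)) ∧
      (∫ θ in Set.Icc (0:ℝ) (2*π), |α + β * Real.cos θ| ^ (-p))
        ≤ (C * (max |α| |β|) ^ (-p)) := by
  have hq0 : 0 < 2*p := by linarith
  have hq1 : 2*p < 1 := by linarith
  set C1 : ℝ := ∫ θ in Set.Icc (0:ℝ) (2*π), |Real.sin (θ/2)| ^ (-(2*p)) with hC1
  have hC1nn : 0 ≤ C1 :=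
    setIntegral_nonneg measurableSet_Icc (fun θ _ => Real.rpow_nonneg (abs_nonneg _) _)
  have h2p1 : Real.rpow 2 (-p) ≤ 1 :=
    Real.rpow_le_one_of_one_le_of_nonpos (by norm_num) (by linarith)
  refine ⟨2*C1 + 1, by positivity, ?_⟩
  intro α β hmax
  have hFmeas : Measurable (fun θ : ℝ => |α + β * Real.cos θ| ^ (-p)) :=
    (((continuous_const.add (continuous_const.mul Real.continuous_cos)).abs).measurable).pow_const
      (-p)
  have hFnn : ∀ θ : ℝ, 0 ≤ |α + β * Real.cos θ| ^ (-p) :=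
    fun θ => Real.rpow_nonneg (abs_nonneg _) _
  rcases le_or_gt |α| |β| with hab | hab
  · -- case |α| ≤ |β|
    have hβ : β ≠ 0 := by
      intro h
      rw [h, abs_zero] at hab
      have h0 : |α| = 0 := le_antisymm hab (abs_nonneg _)
      rw [h, abs_zero, h0] at hmax
      simp at hmax
    have hm : max |α| |β| = |β| := max_eq_right hab
    set t : ℝ := -α/β with ht
    have habs_t : |t| ≤ 1 := by
      rw [ht, abs_div, abs_neg, div_le_one (abs_pos.2 hβ)]
      exact hab
    set θ₀ : ℝ := Real.arccos t with hθ₀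
    have hcos : Real.cos θ₀ = t := Real.cos_arccos (abs_le.1 habs_t).1 (abs_le.1 habs_t).2
    have key : ∀ θ : ℝ, |α + β * Real.cos θ|
        = |β| * (2 * (|Real.sin ((θ + θ₀)/2)| * |Real.sin ((θ - θ₀)/2)|)) := by
      intro θ
      have h1 : α + β * Real.cos θ = β * (Real.cos θ - Real.cos θ₀) := by
        rw [hcos, ht]; field_simp; ring
      rw [h1, Real.cos_sub_cos, abs_mul]
      rw [show -2 * Real.sin ((θ + θ₀)/2) * Real.sin ((θ - θ₀)/2)
        = -(2 * (Real.sin ((θ + θ₀)/2) * Real.sin ((θ - θ₀)/2))) by ring, abs_neg, abs_mul,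
        abs_mul]
      norm_num
    -- the majorant
    set A : ℝ → ℝ := fun θ => |Real.sin ((θ + θ₀)/2)| ^ (-(2*p)) with hA
    set B : ℝ → ℝ := fun θ => |Real.sin ((θ - θ₀)/2)| ^ (-(2*p)) with hB
    have hAint : IntegrableOn A (Set.Icc 0 (2*π)) ∧
        ∫ θ in Set.Icc (0:ℝ) (2*π), A θ = C1 := by
      have h := shifted_lemma hq0 hq1 (-θ₀)
      simp only [sub_neg_eq_add] at h
      exact h
    have hBint : IntegrableOn B (Set.Icc 0 (2*π)) ∧
        ∫ θ in Set.Icc (0:ℝ) (2*π), B θ = C1 := shifted_lemma hq0 hq1 θ₀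
    have hbound : ∀ θ : ℝ, |α + β * Real.cos θ| ^ (-p)
        ≤ |β| ^ (-p) * ((A θ + B θ)/2) := by
      intro θ
      rw [key θ]
      rw [Real.mul_rpow (abs_nonneg β) (by positivity),
        Real.mul_rpow (by norm_num) (by positivity),
        Real.mul_rpow (abs_nonneg _) (abs_nonneg _)]
      have hx : 0 ≤ |Real.sin ((θ + θ₀)/2)| ^ (-p) := Real.rpow_nonneg (abs_nonneg _) _
      have hy : 0 ≤ |Real.sin ((θ - θ₀)/2)| ^ (-p) := Real.rpow_nonneg (abs_nonneg _) _
      have hAB : |Real.sin ((θ + θ₀)/2)| ^ (-p) * |Real.sin ((θ - θ₀)/2)| ^ (-p)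
          ≤ (A θ + B θ)/2 := by
        have h1 := sq_rpow_neg (abs_nonneg (Real.sin ((θ + θ₀)/2))) p
        have h2 := sq_rpow_neg (abs_nonneg (Real.sin ((θ - θ₀)/2))) p
        have := sq_nonneg (|Real.sin ((θ + θ₀)/2)| ^ (-p) - |Real.sin ((θ - θ₀)/2)| ^ (-p))
        simp only [hA, hB]
        nlinarith
      calc |β| ^ (-p) * ((2:ℝ) ^ (-p) * (|Real.sin ((θ + θ₀)/2)| ^ (-p)
            * |Real.sin ((θ - θ₀)/2)| ^ (-p)))
          ≤ |β| ^ (-p) * (1 * ((A θ + B θ)/2)) := by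
            apply mul_le_mul_of_nonneg_left ?_ (Real.rpow_nonneg (abs_nonneg _) _)
            apply mul_le_mul h2p1 hAB (by positivity) (by norm_num)
        _ = |β| ^ (-p) * ((A θ + B θ)/2) := by ring
    have hgint : IntegrableOn (fun θ => |β| ^ (-p) * ((A θ + B θ)/2)) (Set.Icc 0 (2*π)) := by
      exact (((hAint.1.add hBint.1).div_const 2).const_mul _)
    constructor
    · refine hgint.integrable.mono' hFmeas.aestronglyMeasurable ?_
      refine Filter.Eventually.of_forall fun θ => ?_
      rw [Real.norm_eq_abs, abs_of_nonneg (hFnn θ)]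
      exact hbound θ
    · calc (∫ θ in Set.Icc (0:ℝ) (2*π), |α + β * Real.cos θ| ^ (-p))
          ≤ ∫ θ in Set.Icc (0:ℝ) (2*π), |β| ^ (-p) * ((A θ + B θ)/2) := by
            refine integral_mono_of_nonneg (Filter.Eventually.of_forall fun θ => hFnn θ)
              hgint.integrable (Filter.Eventually.of_forall fun θ => hbound θ)
        _ = |β| ^ (-p) * ((C1 + C1)/2) := by
            rw [integral_const_mul]
            congr 1
            rw [integral_div]
            congr 1
            rw [integral_add hAint.1 hBint.1, hAint.2, hBint.2]
        _ ≤ (2*C1 + 1) * (max |α| |β|) ^ (-p) := by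
            rw [hm]
            have : (C1 + C1)/2 = C1 := by ring
            rw [this, mul_comm]
            apply mul_le_mul_of_nonneg_right ?_ (Real.rpow_nonneg (abs_nonneg _) _)
            linarith
  · -- case |β| < |α|
    have hα : α ≠ 0 := by
      intro h
      rw [h, abs_zero] at hab
      exact absurd hab (not_lt.2 (abs_nonneg β))
    have hm : max |α| |β| = |α| := max_eq_left hab.le
    set A : ℝ → ℝ := fun θ => |Real.sin (θ/2)| ^ (-(2*p)) with hA
    set B : ℝ → ℝ := fun θ => |Real.cos (θ/2)| ^ (-(2*p)) with hB
    have hAint : IntegrableOn A (Set.Icc 0 (2*π)) := base_integrable hq0 hq1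
    have hAval : ∫ θ in Set.Icc (0:ℝ) (2*π), A θ = C1 := rfl
    have hBint : IntegrableOn B (Set.Icc 0 (2*π)) ∧
        ∫ θ in Set.Icc (0:ℝ) (2*π), B θ = C1 := by
      have h := shifted_lemma hq0 hq1 (-π)
      have he : (fun θ : ℝ => |Real.sin ((θ - (-π))/2)| ^ (-(2*p))) = B := by
        funext θ
        rw [show (θ - (-π))/2 = θ/2 + π/2 by ring, Real.sin_add_pi_div_two]
      rw [he] at h
      exact h
    have hband : ∀ θ : ℝ, Real.cos θ ≠ 1 → Real.cos θ ≠ -1 →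
        |α + β * Real.cos θ| ^ (-p) ≤ |α| ^ (-p) * (A θ + B θ) := by
      intro θ hc1 hc2
      have hcabs : |Real.cos θ| < 1 := by
        rcases lt_or_eq_of_le (Real.abs_cos_le_one θ) with h | h
        · exact h
        · rcases (abs_eq (by norm_num : (0:ℝ) ≤ 1)).1 h with h' | h'
          · exact absurd h' hc1
          · exact absurd h' hc2
      have hpos : 0 < |α| * (1 - |Real.cos θ|) := by
        have := abs_pos.2 hα
        nlinarith
      have hlow : |α| * (1 - |Real.cos θ|) ≤ |α + β * Real.cos θ| := by
        have h1 : |α| ≤ |α + β * Real.cos θ| + |β * Real.cos θ| := by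
          have := abs_add_le (α + β * Real.cos θ) (-(β * Real.cos θ))
          simpa using this
        have h2 : |β * Real.cos θ| ≤ |α| * |Real.cos θ| := by
          rw [abs_mul]
          exact mul_le_mul_of_nonneg_right hab.le (abs_nonneg _)
        nlinarith [abs_nonneg (Real.cos θ)]
      have hstep : |α + β * Real.cos θ| ^ (-p) ≤ (|α| * (1 - |Real.cos θ|)) ^ (-p) :=
        Real.rpow_le_rpow_of_nonpos hpos hlow (by linarith)
      have hsplit : (|α| * (1 - |Real.cos θ|)) ^ (-p)
          = |α| ^ (-p) * (1 - |Real.cos θ|) ^ (-p) :=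
        Real.mul_rpow (abs_nonneg _) (by linarith)
      have hcos1 := Real.cos_le_one θ
      have hcosm1 := Real.neg_one_le_cos θ
      have h1c : (1 - Real.cos θ) ^ (-p) ≤ A θ := by
        have hc := Real.cos_two_mul (θ/2)
        have hs := Real.sin_sq_add_cos_sq (θ/2)
        rw [show 2 * (θ/2) = θ by ring] at hc
        have hid : 1 - Real.cos θ = 2 * Real.sin (θ/2)^2 := by nlinarith
        rw [hid, Real.mul_rpow (by norm_num) (sq_nonneg _)]
        calc (2:ℝ) ^ (-p) * (Real.sin (θ/2)^2) ^ (-p)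
            ≤ 1 * (Real.sin (θ/2)^2) ^ (-p) :=
              mul_le_mul_of_nonneg_right h2p1 (Real.rpow_nonneg (sq_nonneg _) _)
          _ = A θ := by rw [one_mul, ← sq_abs, rpow_sq_neg (abs_nonneg _) p]
      have h1d : (1 + Real.cos θ) ^ (-p) ≤ B θ := by
        have hc := Real.cos_two_mul (θ/2)
        rw [show 2 * (θ/2) = θ by ring] at hc
        have hid : 1 + Real.cos θ = 2 * Real.cos (θ/2)^2 := by nlinarith
        rw [hid, Real.mul_rpow (by norm_num) (sq_nonneg _)]
        calc (2:ℝ) ^ (-p) * (Real.cos (θ/2)^2) ^ (-p)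
            ≤ 1 * (Real.cos (θ/2)^2) ^ (-p) :=
              mul_le_mul_of_nonneg_right h2p1 (Real.rpow_nonneg (sq_nonneg _) _)
          _ = B θ := by rw [one_mul, ← sq_abs, rpow_sq_neg (abs_nonneg _) p]
      have hminle : (1 - |Real.cos θ|) ^ (-p) ≤ A θ + B θ := by
        have hmineq : (1 - |Real.cos θ|) = min (1 - Real.cos θ) (1 + Real.cos θ) := by
          rcases abs_cases (Real.cos θ) with ⟨h, _⟩ | ⟨h, _⟩
          · rw [h, min_eq_left (by linarith)]
          · rw [h, min_eq_right (by linarith)]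
            ring
        rw [hmineq]
        exact (min_rpow_le_add (by linarith) (by linarith)).trans (add_le_add h1c h1d)
      calc |α + β * Real.cos θ| ^ (-p) ≤ |α| ^ (-p) * (1 - |Real.cos θ|) ^ (-p) := by
            rw [← hsplit]; exact hstep
        _ ≤ |α| ^ (-p) * (A θ + B θ) :=
            mul_le_mul_of_nonneg_left hminle (Real.rpow_nonneg (abs_nonneg _) _)
    have hgint : IntegrableOn (fun θ => |α| ^ (-p) * (A θ + B θ)) (Set.Icc 0 (2*π)) :=
      (hAint.add hBint.1).const_mul _
    have hae : ∀ᵐ θ : ℝ ∂(volume.restrict (Set.Icc 0 (2*π))),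
        |α + β * Real.cos θ| ^ (-p) ≤ |α| ^ (-p) * (A θ + B θ) := by
      have h1 : volume ({θ : ℝ | Real.cos θ = 1} ∪ {θ : ℝ | Real.cos θ = -1}) = 0 :=
        measure_union_null (cos_level_null 1) (cos_level_null (-1))
      have h2 : ∀ᵐ θ : ℝ, θ ∉ ({θ : ℝ | Real.cos θ = 1} ∪ {θ : ℝ | Real.cos θ = -1}) :=
        measure_eq_zero_iff_ae_notMem.mp h1
      refine ae_restrict_of_ae (h2.mono fun θ hθ => ?_)
      simp only [Set.mem_union, Set.mem_setOf_eq, not_or] at hθ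
      exact hband θ hθ.1 hθ.2
    constructor
    · refine hgint.integrable.mono' hFmeas.aestronglyMeasurable ?_
      refine hae.mono fun θ h => ?_
      rw [Real.norm_eq_abs, abs_of_nonneg (hFnn θ)]
      exact h
    · calc (∫ θ in Set.Icc (0:ℝ) (2*π), |α + β * Real.cos θ| ^ (-p))
          ≤ ∫ θ in Set.Icc (0:ℝ) (2*π), |α| ^ (-p) * (A θ + B θ) :=
            integral_mono_of_nonneg (Filter.Eventually.of_forall fun θ => hFnn θ)
              hgint.integrable hae
        _ = |α| ^ (-p) * (C1 + C1) := by
            rw [integral_const_mul]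
            congr 1
            rw [integral_add hAint hBint.1, hAval, hBint.2]
        _ ≤ (2*C1 + 1) * (max |α| |β|) ^ (-p) := by
            rw [hm, mul_comm]
            apply mul_le_mul_of_nonneg_right ?_ (Real.rpow_nonneg (abs_nonneg _) _)
            linarith


end Stmt2Aux
open Stmt2Aux

/-- Fix `p ∈ (0, 1/2)`. There exist `K₀ > 0` and `γ' ∈ (0, 1/2)` such that for all
`K ≥ K₀`, all `x ∈ 𝕋²`, and all unit vectors `v`, the average over
`(θ₁, θ₂) ∈ [0,2π)²` of `‖J(θ₂) J(θ₁) v‖^{-p}` is at most `γ'`. -/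
theorem stmt_2 (p : ℝ) (hp : 0 < p) (hp' : p < 1 / 2) :
    ∃ K₀ : ℝ, 0 < K₀ ∧ ∃ γ' : ℝ, 0 < γ' ∧ γ' < 1 / 2 ∧
      ∀ K : ℝ, K₀ ≤ K →
        ∀ _x : AddCircle (2 * π) × AddCircle (2 * π),
          ∀ v : Fin 2 → ℝ, (v 0) ^ 2 + (v 1) ^ 2 = 1 →
            (1 / (4 * π ^ 2)) *
                ∫ θ₁ in Set.Icc (0 : ℝ) (2 * π), ∫ θ₂ in Set.Icc (0 : ℝ) (2 * π),
                  (Real.sqrt ((((chirikovJac K θ₂ * chirikovJac K θ₁).mulVec v) 0) ^ 2 +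
                      (((chirikovJac K θ₂ * chirikovJac K θ₁).mulVec v) 1) ^ 2)) ^ (-p)
              ≤ γ' := by
  obtain ⟨C, hC, hM⟩ := master hp hp'
  refine ⟨max 2 ((8*C^2) ^ ((1:ℝ)/p)), lt_of_lt_of_le two_pos (le_max_left _ _),
    1/4, by norm_num, by norm_num, ?_⟩
  intro K hK _x v hv
  have hπ := Real.pi_pos
  have hK2 : (2:ℝ) ≤ K := le_trans (le_max_left _ _) hK
  have hK0 : (0:ℝ) < K := by linarith
  set u0 : ℝ → ℝ := fun θ₁ => v 0 + K * Real.cos θ₁ * v 1 with hu0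
  set u1 : ℝ → ℝ := fun θ₁ => v 0 + (1 + K * Real.cos θ₁) * v 1 with hu1
  set F : ℝ → ℝ → ℝ := fun θ₁ θ₂ =>
    (Real.sqrt ((((chirikovJac K θ₂ * chirikovJac K θ₁).mulVec v) 0) ^ 2 +
      (((chirikovJac K θ₂ * chirikovJac K θ₁).mulVec v) 1) ^ 2)) ^ (-p) with hF
  have hFnn : ∀ θ₁ θ₂, 0 ≤ F θ₁ θ₂ := fun θ₁ θ₂ => Real.rpow_nonneg (Real.sqrt_nonneg _) _
  -- inner estimate
  have inner : ∀ θ₁ : ℝ, u1 θ₁ ≠ 0 →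
      (∫ θ₂ in Set.Icc (0:ℝ) (2*π), F θ₁ θ₂) ≤ C * K ^ (-p) * |u1 θ₁| ^ (-p) := by
    intro θ₁ h1
    have hKu1 : K * u1 θ₁ ≠ 0 := mul_ne_zero hK0.ne' h1
    have hmaxi : 0 < max |u0 θ₁| |K * u1 θ₁| :=
      lt_max_iff.2 (Or.inr (abs_pos.2 hKu1))
    obtain ⟨hint, hval⟩ := hM (u0 θ₁) (K * u1 θ₁) hmaxi
    have haeb : ∀ᵐ θ₂ ∂(volume.restrict (Set.Icc (0:ℝ) (2*π))),
        F θ₁ θ₂ ≤ |u0 θ₁ + (K * u1 θ₁) * Real.cos θ₂| ^ (-p) := by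
      have hnull : volume {θ₂ : ℝ | Real.cos θ₂ = -(u0 θ₁)/(K * u1 θ₁)} = 0 :=
        cos_level_null _
      have h2 := measure_eq_zero_iff_ae_notMem.mp hnull
      refine ae_restrict_of_ae (h2.mono fun θ₂ hθ₂ => ?_)
      simp only [Set.mem_setOf_eq] at hθ₂
      have hW0 : u0 θ₁ + (K * u1 θ₁) * Real.cos θ₂ ≠ 0 := by
        intro h
        apply hθ₂
        field_simp
        linarith
      have hm0 : ((chirikovJac K θ₂ * chirikovJac K θ₁).mulVec v) 0
          = u0 θ₁ + (K * u1 θ₁) * Real.cos θ₂ := chirikov_mulVec0 K θ₁ θ₂ v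
      have hle : |u0 θ₁ + (K * u1 θ₁) * Real.cos θ₂|
          ≤ Real.sqrt ((((chirikovJac K θ₂ * chirikovJac K θ₁).mulVec v) 0) ^ 2 +
              (((chirikovJac K θ₂ * chirikovJac K θ₁).mulVec v) 1) ^ 2) := by
        rw [← hm0, ← Real.sqrt_sq_eq_abs]
        exact Real.sqrt_le_sqrt (le_add_of_nonneg_right (sq_nonneg _))
      exact Real.rpow_le_rpow_of_nonpos (abs_pos.2 hW0) hle (by linarith)
    calc (∫ θ₂ in Set.Icc (0:ℝ) (2*π), F θ₁ θ₂)
        ≤ ∫ θ₂ in Set.Icc (0:ℝ) (2*π), |u0 θ₁ + (K * u1 θ₁) * Real.cos θ₂| ^ (-p) :=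
          integral_mono_of_nonneg (Filter.Eventually.of_forall fun θ₂ => hFnn θ₁ θ₂)
            hint haeb
      _ ≤ C * (max |u0 θ₁| |K * u1 θ₁|) ^ (-p) := hval
      _ ≤ C * K ^ (-p) * |u1 θ₁| ^ (-p) := by
          have he : |K * u1 θ₁| = K * |u1 θ₁| := by
            rw [abs_mul, abs_of_pos hK0]
          have h1' : K * |u1 θ₁| ≤ max |u0 θ₁| |K * u1 θ₁| := by
            rw [← he]; exact le_max_right _ _
          have hp1 : 0 < K * |u1 θ₁| := by
            have := abs_pos.2 h1
            positivity
          have h2' : (max |u0 θ₁| |K * u1 θ₁|) ^ (-p) ≤ (K * |u1 θ₁|) ^ (-p) :=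
            Real.rpow_le_rpow_of_nonpos hp1 h1' (by linarith)
          rw [Real.mul_rpow hK0.le (abs_nonneg _)] at h2'
          calc C * (max |u0 θ₁| |K * u1 θ₁|) ^ (-p)
              ≤ C * (K ^ (-p) * |u1 θ₁| ^ (-p)) := mul_le_mul_of_nonneg_left h2' hC.le
            _ = C * K ^ (-p) * |u1 θ₁| ^ (-p) := by ring
  -- outer estimate
  have hmax2 : 0 < max |v 0 + v 1| |K * v 1| := by
    rcases eq_or_ne (v 1) 0 with h1 | h1
    · have hv0 : v 0 ≠ 0 := by
        intro h0
        rw [h0, h1] at hv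
        norm_num at hv
      refine lt_max_iff.2 (Or.inl (abs_pos.2 ?_))
      rw [h1, add_zero]
      exact hv0
    · exact lt_max_iff.2 (Or.inr (abs_pos.2 (mul_ne_zero hK0.ne' h1)))
  obtain ⟨hint2, hval2⟩ := hM (v 0 + v 1) (K * v 1) hmax2
  set G : ℝ → ℝ := fun θ₁ => C * K ^ (-p) * |(v 0 + v 1) + (K * v 1) * Real.cos θ₁| ^ (-p)
    with hG
  have hu1G : ∀ θ₁ : ℝ, u1 θ₁ = (v 0 + v 1) + (K * v 1) * Real.cos θ₁ := by
    intro θ₁; rw [hu1]; ring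
  have houter : ∀ᵐ θ₁ ∂(volume.restrict (Set.Icc (0:ℝ) (2*π))),
      (∫ θ₂ in Set.Icc (0:ℝ) (2*π), F θ₁ θ₂) ≤ G θ₁ := by
    rcases eq_or_ne (v 1) 0 with h1 | h1
    · refine ae_restrict_of_ae (Filter.Eventually.of_forall fun θ₁ => ?_)
      have hne : u1 θ₁ ≠ 0 := by
        rw [hu1, h1]
        simpa [h1] using hmax2.ne'
      have := inner θ₁ hne
      rwa [hu1G θ₁] at this
    · have hnull : volume {θ₁ : ℝ | Real.cos θ₁ = -(v 0 + v 1)/(K * v 1)} = 0 :=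
        cos_level_null _
      have h2 := measure_eq_zero_iff_ae_notMem.mp hnull
      refine ae_restrict_of_ae (h2.mono fun θ₁ hθ₁ => ?_)
      simp only [Set.mem_setOf_eq] at hθ₁
      have hne : u1 θ₁ ≠ 0 := by
        rw [hu1G θ₁]
        intro h
        apply hθ₁
        have hKv1 : K * v 1 ≠ 0 := mul_ne_zero hK0.ne' h1
        field_simp
        linarith
      have := inner θ₁ hne
      rwa [hu1G θ₁] at this
  have hGint : Integrable G (volume.restrict (Set.Icc (0:ℝ) (2*π))) :=
    hint2.const_mul _
  have hΦnn : ∀ θ₁ : ℝ, 0 ≤ ∫ θ₂ in Set.Icc (0:ℝ) (2*π), F θ₁ θ₂ :=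
    fun θ₁ => integral_nonneg (fun θ₂ => hFnn θ₁ θ₂)
  have hstep1 : (∫ θ₁ in Set.Icc (0:ℝ) (2*π), ∫ θ₂ in Set.Icc (0:ℝ) (2*π), F θ₁ θ₂)
      ≤ ∫ θ₁ in Set.Icc (0:ℝ) (2*π), G θ₁ :=
    integral_mono_of_nonneg (Filter.Eventually.of_forall fun θ₁ => hΦnn θ₁) hGint houter
  have hstep2 : (∫ θ₁ in Set.Icc (0:ℝ) (2*π), G θ₁)
      ≤ C * K ^ (-p) * (C * (max |v 0 + v 1| |K * v 1|) ^ (-p)) := by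
    rw [hG]
    rw [integral_const_mul]
    apply mul_le_mul_of_nonneg_left hval2
    positivity
  -- bound max ≥ 1/2
  have hhalf : (1:ℝ)/2 ≤ max |v 0 + v 1| |K * v 1| := by
    rcases le_or_gt (1/2 : ℝ) |K * v 1| with h | h
    · exact h.trans (le_max_right _ _)
    · have hKv : K * |v 1| < 1/2 := by
        rw [abs_mul, abs_of_pos hK0] at h
        exact h
      have hv1small : |v 1| ≤ 1/4 := by nlinarith [abs_nonneg (v 1)]
      have hsq : v 1 ^ 2 ≤ 1/16 := by
        rw [← sq_abs]
        nlinarith [abs_nonneg (v 1)]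
      have hv0 : 3/4 ≤ |v 0| := by
        have h0 : (3/4:ℝ)^2 ≤ v 0 ^ 2 := by nlinarith
        nlinarith [sq_abs (v 0), abs_nonneg (v 0)]
      have habs : |v 0| ≤ |v 0 + v 1| + |v 1| := by
        have h' := abs_add_le (v 0 + v 1) (-(v 1))
        simpa using h'
      have : 1/2 ≤ |v 0 + v 1| := by linarith
      exact this.trans (le_max_left _ _)
  have hmaxp : (max |v 0 + v 1| |K * v 1|) ^ (-p) ≤ 2 := by
    have h1 : (max |v 0 + v 1| |K * v 1|) ^ (-p) ≤ ((1:ℝ)/2) ^ (-p) :=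
      Real.rpow_le_rpow_of_nonpos (by norm_num) hhalf (by linarith)
    have h2 : ((1:ℝ)/2) ^ (-p) = (2:ℝ) ^ p := by
      rw [show ((1:ℝ)/2) = (2:ℝ)⁻¹ by norm_num, ← Real.rpow_neg_one (2:ℝ),
        ← Real.rpow_mul (by norm_num : (0:ℝ) ≤ 2)]
      norm_num
    have h3 : (2:ℝ) ^ p ≤ (2:ℝ) ^ (1:ℝ) :=
      Real.rpow_le_rpow_of_exponent_le (by norm_num) (by linarith)
    calc (max |v 0 + v 1| |K * v 1|) ^ (-p) ≤ ((1:ℝ)/2) ^ (-p) := h1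
      _ = (2:ℝ) ^ p := h2
      _ ≤ (2:ℝ) ^ (1:ℝ) := h3
      _ = 2 := Real.rpow_one 2
  -- bound on K^{-p}
  have hKp : K ^ (-p) ≤ (8*C^2)⁻¹ := by
    have h8 : (0:ℝ) < 8*C^2 := by positivity
    have hKb : (8*C^2) ^ ((1:ℝ)/p) ≤ K := le_trans (le_max_right _ _) hK
    have hbase : (0:ℝ) < (8*C^2) ^ ((1:ℝ)/p) := Real.rpow_pos_of_pos h8 _
    have h1 : K ^ (-p) ≤ ((8*C^2) ^ ((1:ℝ)/p)) ^ (-p) :=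
      Real.rpow_le_rpow_of_nonpos hbase hKb (by linarith)
    have h2 : ((8*C^2) ^ ((1:ℝ)/p)) ^ (-p) = (8*C^2)⁻¹ := by
      rw [← Real.rpow_mul h8.le, show (1:ℝ)/p * (-p) = -1 by field_simp,
        Real.rpow_neg_one]
    rw [h2] at h1
    exact h1
  -- combine
  have hX : (∫ θ₁ in Set.Icc (0:ℝ) (2*π), ∫ θ₂ in Set.Icc (0:ℝ) (2*π), F θ₁ θ₂) ≤ 1/4 := by
    have hc1 : C * K ^ (-p) * (C * (max |v 0 + v 1| |K * v 1|) ^ (-p))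
        ≤ C * K ^ (-p) * (C * 2) := by
      apply mul_le_mul_of_nonneg_left ?_ (by positivity : (0:ℝ) ≤ C * K ^ (-p))
      exact mul_le_mul_of_nonneg_left hmaxp hC.le
    have hc2 : C * K ^ (-p) * (C * 2) = 2*C^2 * K ^ (-p) := by ring
    have hc3 : 2*C^2 * K ^ (-p) ≤ 2*C^2 * (8*C^2)⁻¹ :=
      mul_le_mul_of_nonneg_left hKp (by positivity)
    have hc4 : 2*C^2 * (8*C^2)⁻¹ = 1/4 := by
      field_simp
      ring
    linarith [hstep1, hstep2]
  have hXnn : 0 ≤ (∫ θ₁ in Set.Icc (0:ℝ) (2*π), ∫ θ₂ in Set.Icc (0:ℝ) (2*π), F θ₁ θ₂) :=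
    integral_nonneg (fun θ₁ => hΦnn θ₁)
  have hcoef : (0:ℝ) < 1 / (4 * π ^ 2) := by positivity
  have hcoef1 : 1 / (4 * π ^ 2) ≤ 1 := by
    have h3 := Real.pi_gt_three
    rw [div_le_one (by positivity)]
    nlinarith
  calc (1 / (4 * π ^ 2)) *
        (∫ θ₁ in Set.Icc (0:ℝ) (2*π), ∫ θ₂ in Set.Icc (0:ℝ) (2*π), F θ₁ θ₂)
      ≤ 1 * (1/4 : ℝ) := by
        apply mul_le_mul hcoef1 hX hXnn (by norm_num)
    _ = 1/4 := by norm_num
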